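/- Let Q₁ = [[2a₁, c₁], [c₁, 2b₁]] and Q₂ = [[2a₂, c₂], [c₂, 2b₂]] be reduced positive-definite even integral binary quadratic forms (aᵢ, bᵢ, cᵢ ∈ ℤ, aᵢ, bᵢ > 0, 4aᵢbᵢ − cᵢ² > 0, −aᵢ ≤ cᵢ ≤ aᵢ ≤ bᵢ), and suppose Q₁ = γᵀ Q₂ γ for some γ ∈ SL₂(ℤ). Then either Q₁ = Q₂, or {Q₁, Q₂} = {[[2a, a], [a, 2b]], [[2a, −a], [−a, 2b]]} for some integers a, b, or {Q₁, Q₂} = {[[2a, b], [b, 2a]], [[2a, −b], [−b, 2a]]} for some integers a, b. -/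

import Mathlib

open Matrix

/-- For a reduced form, any value with `y ≠ 0` is at least `b`. -/
lemma form_ge_b (a b c x y : ℤ) (ha : 0 < a) (hab : a ≤ b) (h1 : -a ≤ c) (h2 : c ≤ a)
    (hy : y ≠ 0) : b ≤ a * x ^ 2 + c * x * y + b * y ^ 2 := by
  have hy2 : 1 ≤ y ^ 2 := by rcases hy.lt_or_gt with h | h <;> nlinarith
  rcases eq_or_ne x 0 with hx | hx
  · subst hx; nlinarith
  · have hx2 : 1 ≤ x ^ 2 := by rcases hx.lt_or_gt with h | h <;> nlinarith
    nlinarith [mul_nonneg (by linarith : (0:ℤ) ≤ a + c) (sq_nonneg (x + y)),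
      mul_nonneg (by linarith : (0:ℤ) ≤ a - c) (sq_nonneg (x - y))]

lemma abs_ge_of_unit_rel (a c q s : ℤ) (ha : 0 < a) (hq : q ≠ 0) (hs2 : s ^ 2 = 1)
    (hcs : a * q + c * s = 0) : a ≤ c ∨ c ≤ -a := by
  have hq2 : 1 ≤ q ^ 2 := by rcases hq.lt_or_gt with h | h <;> nlinarith
  have h : a * q = -(c * s) := by linarith
  have h2 : (a * q) ^ 2 = (c * s) ^ 2 := by rw [h]; ring
  have hc2 : a ^ 2 ≤ c ^ 2 := by nlinarith [h2, hq2, hs2, sq_nonneg a]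
  rcases le_or_gt a c with hl | hl
  · exact Or.inl hl
  · right
    by_contra hcon
    push_neg at hcon
    nlinarith [hc2]

/-- For a reduced form, any nonzero value is at least `a`. -/
lemma form_ge_a (a b c x y : ℤ) (ha : 0 < a) (hab : a ≤ b) (h1 : -a ≤ c) (h2 : c ≤ a)
    (hxy : ¬(x = 0 ∧ y = 0)) : a ≤ a * x ^ 2 + c * x * y + b * y ^ 2 := by
  rcases eq_or_ne y 0 with hy | hy
  · subst hy
    have hx : x ≠ 0 := by tauto
    have hx2 : 1 ≤ x ^ 2 := by rcases hx.lt_or_gt with h | h <;> nlinarith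
    nlinarith
  · have := form_ge_b a b c x y ha hab h1 h2 hy
    linarith

set_option maxHeartbeats 2000000 in
theorem reduced_forms_equivalence (a₁ b₁ c₁ a₂ b₂ c₂ : ℤ)
    (ha₁ : 0 < a₁) (hb₁ : 0 < b₁) (hd₁ : 0 < 4 * a₁ * b₁ - c₁ ^ 2)
    (hred₁ : -a₁ ≤ c₁ ∧ c₁ ≤ a₁ ∧ a₁ ≤ b₁)
    (ha₂ : 0 < a₂) (hb₂ : 0 < b₂) (hd₂ : 0 < 4 * a₂ * b₂ - c₂ ^ 2)
    (hred₂ : -a₂ ≤ c₂ ∧ c₂ ≤ a₂ ∧ a₂ ≤ b₂)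
    (γ : Matrix.SpecialLinearGroup (Fin 2) ℤ)
    (hequiv : !![2 * a₁, c₁; c₁, 2 * b₁] =
      (γ : Matrix (Fin 2) (Fin 2) ℤ)ᵀ * !![2 * a₂, c₂; c₂, 2 * b₂] * γ) :
    !![2 * a₁, c₁; c₁, 2 * b₁] = !![2 * a₂, c₂; c₂, 2 * b₂] ∨
    (∃ a b : ℤ,
      (!![2 * a₁, c₁; c₁, 2 * b₁] = !![2 * a, a; a, 2 * b] ∧
        !![2 * a₂, c₂; c₂, 2 * b₂] = !![2 * a, -a; -a, 2 * b]) ∨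
      (!![2 * a₁, c₁; c₁, 2 * b₁] = !![2 * a, -a; -a, 2 * b] ∧
        !![2 * a₂, c₂; c₂, 2 * b₂] = !![2 * a, a; a, 2 * b])) ∨
    (∃ a b : ℤ,
      (!![2 * a₁, c₁; c₁, 2 * b₁] = !![2 * a, b; b, 2 * a] ∧
        !![2 * a₂, c₂; c₂, 2 * b₂] = !![2 * a, -b; -b, 2 * a]) ∨
      (!![2 * a₁, c₁; c₁, 2 * b₁] = !![2 * a, -b; -b, 2 * a] ∧
        !![2 * a₂, c₂; c₂, 2 * b₂] = !![2 * a, b; b, 2 * a])) := by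
  obtain ⟨hc₁l, hc₁r, hab₁⟩ := hred₁
  obtain ⟨hc₂l, hc₂r, hab₂⟩ := hred₂
  obtain ⟨p, q, r, s, hp, hq, hr, hs⟩ :
      ∃ p q r s : ℤ, (γ : Matrix (Fin 2) (Fin 2) ℤ) 0 0 = p ∧
        (γ : Matrix (Fin 2) (Fin 2) ℤ) 0 1 = q ∧
        (γ : Matrix (Fin 2) (Fin 2) ℤ) 1 0 = r ∧
        (γ : Matrix (Fin 2) (Fin 2) ℤ) 1 1 = s :=
    ⟨_, _, _, _, rfl, rfl, rfl, rfl⟩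
  have hdet : p * s - q * r = 1 := by
    have := γ.prop
    rw [Matrix.det_fin_two, hp, hq, hr, hs] at this
    linarith [this]
  have h00 := congrFun (congrFun hequiv 0) 0
  have h01 := congrFun (congrFun hequiv 0) 1
  have h11 := congrFun (congrFun hequiv 1) 1
  simp [Matrix.mul_apply, Fin.sum_univ_two, Matrix.transpose_apply] at h00 h01 h11
  simp only [hp, hq, hr, hs] at h00 h01 h11
  have E1 : a₁ = a₂ * p ^ 2 + c₂ * p * r + b₂ * r ^ 2 := by linarith [h00]
  have E2 : c₁ = 2 * a₂ * p * q + c₂ * (p * s + q * r) + 2 * b₂ * r * s := by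
    linear_combination h01
  have E3 : b₁ = a₂ * q ^ 2 + c₂ * q * s + b₂ * s ^ 2 := by linarith [h11]
  have R1 : a₂ = a₁ * s ^ 2 + c₁ * s * (-r) + b₁ * (-r) ^ 2 := by
    linear_combination (-(s ^ 2)) * E1 + (s * r) * E2 + (-(r ^ 2)) * E3 +
      (-(a₂ * (p * s - q * r + 1))) * hdet
  have R3 : b₂ = a₁ * (-q) ^ 2 + c₁ * (-q) * p + b₁ * p ^ 2 := by
    linear_combination (-(q ^ 2)) * E1 + (q * p) * E2 + (-(p ^ 2)) * E3 +
      (-(b₂ * (p * s - q * r + 1))) * hdet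
  have hpr : ¬(p = 0 ∧ r = 0) := by
    rintro ⟨h1, h2⟩; rw [h1, h2] at hdet; simp at hdet
  have hsr : ¬(s = 0 ∧ -r = 0) := by
    rintro ⟨h1, h2⟩
    have : r = 0 := by omega
    rw [h1, this] at hdet; simp at hdet
  have haa : a₁ = a₂ := by
    have t1 := form_ge_a a₂ b₂ c₂ p r ha₂ hab₂ hc₂l hc₂r hpr
    have t2 := form_ge_a a₁ b₁ c₁ s (-r) ha₁ hab₁ hc₁l hc₁r hsr
    nlinarith [E1, R1]
  have hbb : b₁ = b₂ := by
    by_cases hs0 : s = 0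
    · -- q * r = -1, so b₁ = a₂ and r ≠ 0 forces b₂ = a₂
      have hqr : q * r = -1 := by rw [hs0] at hdet; linarith
      have hq1 : q = 1 ∨ q = -1 :=
        Int.isUnit_iff.mp (IsUnit.of_mul_eq_one (a := q) (-r) (by linarith))
      have hr0 : r ≠ 0 := by rintro h; rw [h] at hqr; simp at hqr
      have hb1 : b₁ = a₂ := by
        rcases hq1 with h | h <;> rw [h, hs0] at E3 <;> linarith
      have t1 := form_ge_b a₂ b₂ c₂ p r ha₂ hab₂ hc₂l hc₂r hr0
      linarith [E1]
    · have t1 := form_ge_b a₂ b₂ c₂ q s ha₂ hab₂ hc₂l hc₂r hs0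
      have hb12 : b₂ ≤ b₁ := by linarith [E3]
      by_cases hp0 : p = 0
      · have hqr : q * r = -1 := by rw [hp0] at hdet; linarith
        have hq1 : q = 1 ∨ q = -1 :=
          Int.isUnit_iff.mp (IsUnit.of_mul_eq_one (a := q) (-r) (by linarith))
        have hr0 : (-r) ≠ 0 := by rintro h; rw [show r = 0 by omega] at hqr; simp at hqr
        have hb2 : b₂ = a₁ := by
          rcases hq1 with h | h <;> rw [h, hp0] at R3 <;> linarith
        have t2 := form_ge_b a₁ b₁ c₁ s (-r) ha₁ hab₁ hc₁l hc₁r hr0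
        linarith [R1]
      · have t2 := form_ge_b a₁ b₁ c₁ (-q) p ha₁ hab₁ hc₁l hc₁r hp0
        linarith [R3]
  have hD : 4 * a₁ * b₁ - c₁ ^ 2 = 4 * a₂ * b₂ - c₂ ^ 2 := by
    have hdγ : Matrix.det (γ : Matrix (Fin 2) (Fin 2) ℤ) = 1 := γ.prop
    have := congrArg Matrix.det hequiv
    rw [Matrix.det_mul, Matrix.det_mul, Matrix.det_transpose, hdγ,
      Matrix.det_fin_two_of, Matrix.det_fin_two_of] at this
    linarith [this]
  have hcsq : (c₁ - c₂) * (c₁ + c₂) = 0 := by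
    linear_combination (-1 : ℤ) * hD + 4 * b₁ * haa + 4 * a₂ * hbb
  rcases mul_eq_zero.mp hcsq with hc | hc
  · -- c₁ = c₂ : forms are equal
    left
    have hcc : c₁ = c₂ := by linarith
    rw [haa, hbb, hcc]
  · -- c₂ = -c₁
    have hcc : c₂ = -c₁ := by linarith
    by_cases h0 : c₁ = 0
    · left
      rw [haa, hbb, h0, show c₂ = 0 by omega]
    · have key : c₁ = a₁ ∨ c₁ = -a₁ ∨ a₁ = b₁ := by
        by_contra hcon
        push_neg at hcon
        obtain ⟨k1, k2, k3⟩ := hcon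
        have hca : c₁ < a₁ := lt_of_le_of_ne hc₁r k1
        have hca' : -a₁ < c₁ := by
          rcases lt_or_eq_of_le hc₁l with h | h
          · exact h
          · exact absurd h.symm k2
        have hab : a₁ < b₁ := lt_of_le_of_ne hab₁ k3
        -- r must be 0
        have hr0 : r = 0 := by
          by_contra hr0
          have := form_ge_b a₂ b₂ c₂ p r ha₂ hab₂ hc₂l hc₂r hr0
          linarith [E1]
        have hps : p * s = 1 := by rw [hr0] at hdet; linarith
        have hp1 : p = 1 ∨ p = -1 := Int.isUnit_iff.mp (IsUnit.of_mul_eq_one (a := p) s hps)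
        have hsp : s = p := by rcases hp1 with h | h <;> rw [h] at hps ⊢ <;> omega
        have hs2 : s ^ 2 = 1 := by rcases hp1 with h | h <;> rw [hsp, h] <;> ring
        -- q must be 0
        have hq0 : q = 0 := by
          by_contra hq0'
          have hq0 : q ≠ 0 := hq0'
          have hE3' : q * (a₂ * q + c₂ * s) = 0 := by
            linear_combination (-1 : ℤ) * E3 + hbb + (-b₂) * hs2
          have hcs : a₂ * q + c₂ * s = 0 := by
            rcases mul_eq_zero.mp hE3' with h | h
            · exact absurd h hq0
            · exact h
          rcases abs_ge_of_unit_rel a₂ c₂ q s ha₂ hq0 hs2 hcs with h | h <;> omega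
        rw [hr0, hq0, hsp] at E2
        have hpp : p * p = 1 := by rw [hsp] at hps; exact hps
        have : c₁ = c₂ := by linear_combination E2 + c₂ * hpp
        omega
      rcases key with hk | hk | hk
      · right; left
        refine ⟨a₁, b₁, Or.inl ⟨by rw [hk], ?_⟩⟩
        rw [← haa, ← hbb, show c₂ = -a₁ by omega]
      · right; left
        refine ⟨a₁, b₁, Or.inr ⟨by rw [show c₁ = -a₁ from hk], ?_⟩⟩
        rw [← haa, ← hbb, show c₂ = -(-a₁) by omega, neg_neg]
      · right; right
        refine ⟨a₁, c₁, Or.inl ⟨by rw [← hk], ?_⟩⟩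
        rw [← haa, show b₂ = b₁ by omega, ← hk, show c₂ = -c₁ by omega]
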